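/- Let K be a field and q : K → End_{F₃}(F₉) a multiplicative quadratic map such that q(K*) normalizes and is normalized by the group (F₉*)² of squares (where F₉ embeds in End_{F₃}(F₉) by right multiplication). If q(K) is not contained in F₉, then K has order 9 and q(K) generates a subfield of End_{F₃}(F₉) isomorphic to F₉. -/

import Mathlib

instance : Fact (Nat.Prime 3) := ⟨by norm_num⟩

/-- A multiplicative quadratic map `q : K → L` between unital rings. -/
structure IsMultiplicativeQuadraticMap {K L : Type*} [Ring K] [Ring L] (q : K → L) : Prop where
  map_mul : ∀ a b : K, q (a * b) = q a * q b
  map_int : ∀ n : ℤ, q (n : K) = (n : L) ^ 2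
  biadd_left : ∀ a a' b : K,
    (q (a + a' + b) - q (a + a') - q b) =
      (q (a + b) - q a - q b) + (q (a' + b) - q a' - q b)
  biadd_right : ∀ a b b' : K,
    (q (a + (b + b')) - q a - q (b + b')) =
      (q (a + b) - q a - q b) + (q (a + b') - q a - q b')

/-- The embedding of `F₉` into `End_{F₃}(F₉)` by multiplication. -/
noncomputable def iota : GaloisField 3 2 →ₐ[ZMod 3] Module.End (ZMod 3) (GaloisField 3 2) :=
  Algebra.lmul (ZMod 3) (GaloisField 3 2)

local notation "F9" => GaloisField 3 2
local notation "EE" => Module.End (ZMod 3) (GaloisField 3 2)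

open Polynomial

section Aux

lemma iota_inj : Function.Injective iota := Algebra.lmul_injective

instance : Nontrivial EE := by
  refine ⟨1, 0, fun h => ?_⟩
  have := congrArg (fun f : EE => f 1) h
  simp at this

lemma three_eq_zero : (3 : EE) = 0 := by
  have h : ((3:ℕ) : EE) = algebraMap (ZMod 3) EE ((3:ℕ) : ZMod 3) := (map_natCast _ 3).symm
  have h2 : ((3:ℕ) : ZMod 3) = 0 := by decide
  rw [h2, map_zero] at h
  exact_mod_cast h

lemma three_eq_zero' : (1:EE) + 1 + 1 = 0 := by
  have h : ((1:EE) + 1 + 1) = 3 := by norm_num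
  rw [h]; exact three_eq_zero

lemma eq_of_diff {A B x y : EE} (hEq : A = B) (c Z : EE)
    (hd : x - y = c * (A - B) + ((1:EE)+1+1) * Z) : x = y := by
  have hAB : A - B = 0 := sub_eq_zero_of_eq hEq
  rw [hAB, mul_zero, three_eq_zero', zero_mul, add_zero] at hd
  exact sub_eq_zero.mp hd

lemma span_repr (v : F9) (hv : ∀ c : ZMod 3, algebraMap (ZMod 3) F9 c ≠ v) (y : F9) :
    ∃ a b : ZMod 3, a • (1:F9) + b • v = y := by
  have hone : (1:F9) ≠ 0 := one_ne_zero
  have hli : LinearIndependent (ZMod 3) ![(1:F9), v] := by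
    rw [linearIndependent_fin2]
    constructor
    · simp only [Matrix.cons_val_one, Matrix.head_cons]
      intro h; exact hv 0 (by rw [map_zero]; exact h.symm)
    · intro a h
      simp only [Matrix.cons_val_one, Matrix.head_cons, Matrix.cons_val_zero] at h
      by_cases ha : a = 0
      · rw [ha, zero_smul] at h; exact hone h.symm
      · apply hv a⁻¹
        rw [Algebra.algebraMap_eq_smul_one, ← h, smul_smul, inv_mul_cancel₀ ha, one_smul]
  have hfr : Module.finrank (ZMod 3) F9 = 2 := GaloisField.finrank 3 (by norm_num)
  have hsp : Submodule.span (ZMod 3) (Set.range ![(1:F9), v]) = ⊤ := by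
    apply Submodule.eq_top_of_finrank_eq
    rw [finrank_span_eq_card hli, hfr]; simp
  have hmem : y ∈ Submodule.span (ZMod 3) ({(1:F9), v} : Set F9) := by
    have : (Set.range ![(1:F9), v]) = {(1:F9), v} := by
      simp [Matrix.range_cons, Matrix.range_empty, Set.pair_comm]
    rw [← this, hsp]; trivial
  exact Submodule.mem_span_pair.mp hmem

lemma comm_mem_range_iota (v : F9) (hv : ∀ c : ZMod 3, algebraMap (ZMod 3) F9 c ≠ v)
    (x : EE) (hx : x * iota v = iota v * x) : x ∈ Set.range iota := by
  refine ⟨x 1, ?_⟩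
  apply LinearMap.ext
  intro y
  obtain ⟨a, b, rfl⟩ := span_repr v hv y
  have hxv : x v = v * x 1 := by
    have h1 : iota v 1 = v := by rw [iota]; simp [Algebra.lmul]
    calc x v = x (iota v 1) := by rw [h1]
    _ = (x * iota v) 1 := rfl
    _ = (iota v * x) 1 := by rw [hx]
    _ = v * x 1 := rfl
  have : iota (x 1) (a • (1:F9) + b • v) = x 1 * (a • (1:F9) + b • v) := rfl
  rw [this, map_add, map_smul, map_smul, hxv, mul_add]
  rw [mul_smul_comm, mul_smul_comm, mul_one, mul_comm (x 1) v]

lemma exists_gen : ∃ g : F9, g ≠ 0 ∧ (g^2) * (g^2) = -1 ∧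
    ∀ c : ZMod 3, algebraMap (ZMod 3) F9 c ≠ g^2 := by
  haveI : Fintype F9 := Fintype.ofFinite _
  classical
  have hcard : Fintype.card F9 = 9 := by
    have := GaloisField.card 3 2 (by norm_num)
    rwa [Nat.card_eq_fintype_card] at this
  obtain ⟨γ, hγ⟩ := IsCyclic.exists_generator (α := F9ˣ)
  have hcu : Fintype.card F9ˣ = 8 := by
    rw [Fintype.card_units, hcard]
  have horder : orderOf γ = 8 := by
    rw [orderOf_eq_card_of_forall_mem_zpowers hγ, Nat.card_eq_fintype_card, hcu]
  have h8 : ((γ:F9))^8 = 1 := by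
    have : γ ^ 8 = 1 := by rw [← horder, pow_orderOf_eq_one]
    calc ((γ:F9))^8 = ((γ^8 : F9ˣ) : F9) := by push_cast; ring
    _ = 1 := by rw [this]; rfl
  have h4 : ((γ:F9))^4 ≠ 1 := by
    intro h
    have : γ ^ 4 = 1 := Units.ext (by push_cast; exact h)
    have := orderOf_dvd_of_pow_eq_one this
    rw [horder] at this
    norm_num at this
  have hg4 : ((γ:F9))^4 = -1 := by
    have hfac : (((γ:F9))^4 - 1) * (((γ:F9))^4 + 1) = 0 := by
      have : ((γ:F9))^8 - 1 = 0 := by rw [h8]; ring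
      calc (((γ:F9))^4 - 1) * (((γ:F9))^4 + 1) = ((γ:F9))^8 - 1 := by ring
      _ = 0 := this
    rcases mul_eq_zero.mp hfac with h | h
    · exact absurd (by linear_combination h : ((γ:F9))^4 = 1) h4
    · linear_combination h
  refine ⟨(γ:F9), Units.ne_zero γ, by linear_combination hg4, ?_⟩
  intro c hc
  have hc2 : algebraMap (ZMod 3) F9 (c^2) = -1 := by
    rw [map_pow, hc]; linear_combination hg4
  have : algebraMap (ZMod 3) F9 (c^2) = algebraMap (ZMod 3) F9 (-1) := by
    rw [hc2, map_neg, map_one]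
  have := (algebraMap (ZMod 3) F9).injective this
  have hdec : ∀ c : ZMod 3, c ^ 2 ≠ -1 := by decide
  exact hdec c this

lemma minpoly_w (w : F9) (hw : w * w = -1)
    (hw' : ∀ c : ZMod 3, algebraMap (ZMod 3) F9 c ≠ w) :
    minpoly (ZMod 3) w = X^2 + 1 := by
  have hint : IsIntegral (ZMod 3) w := IsIntegral.of_finite (ZMod 3) w
  have haev : Polynomial.aeval w ((X^2 + 1 : (ZMod 3)[X])) = 0 := by
    rw [map_add, map_pow, aeval_X, map_one]
    rw [pow_two, hw]; ring
  have hdvd : minpoly (ZMod 3) w ∣ X^2 + 1 := minpoly.dvd (ZMod 3) w haev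
  have hmon : (minpoly (ZMod 3) w).Monic := minpoly.monic hint
  have hX21 : (X^2 + 1 : (ZMod 3)[X]) = X^2 + C 1 := by rw [map_one]
  have hndX : (X^2 + 1 : (ZMod 3)[X]).natDegree = 2 := by
    rw [hX21]; exact natDegree_X_pow_add_C
  have hne : (X^2 + 1 : (ZMod 3)[X]) ≠ 0 := by
    intro h
    have := congrArg natDegree h
    rw [hndX] at this; simp at this
  have hle : (minpoly (ZMod 3) w).natDegree ≤ 2 := by
    have := natDegree_le_of_dvd hdvd hne
    rwa [hndX] at this
  have hpos : 0 < (minpoly (ZMod 3) w).natDegree := minpoly.natDegree_pos hint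
  have hd2 : (minpoly (ZMod 3) w).natDegree = 2 := by
    rcases Nat.lt_or_ge (minpoly (ZMod 3) w).natDegree 2 with h | h
    · exfalso
      have h1 : (minpoly (ZMod 3) w).natDegree = 1 := by omega
      have := hmon.eq_X_add_C h1
      have haev1 := minpoly.aeval (ZMod 3) w
      rw [this] at haev1
      rw [map_add, aeval_X, aeval_C] at haev1
      apply hw' (-(minpoly (ZMod 3) w).coeff 0)
      rw [map_neg]
      linear_combination -haev1
    · omega
  obtain ⟨k, hk⟩ := hdvd
  have hmne : minpoly (ZMod 3) w ≠ 0 := hmon.ne_zero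
  have hkne : k ≠ 0 := by
    intro h; rw [h, mul_zero] at hk; exact hne hk
  have hdk : k.natDegree = 0 := by
    have := congrArg natDegree hk
    rw [hndX, natDegree_mul hmne hkne, hd2] at this
    omega
  obtain ⟨a, ha⟩ := natDegree_eq_zero.mp hdk
  have ha1 : a = 1 := by
    have hlc := congrArg leadingCoeff hk
    rw [leadingCoeff_mul, hmon.leadingCoeff, one_mul, ← ha] at hlc
    have : (X^2 + 1 : (ZMod 3)[X]).leadingCoeff = 1 := by
      rw [hX21]; exact monic_X_pow_add_C 1 (by norm_num)
    rw [this] at hlc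
    simpa using hlc.symm
  rw [← ha, ha1, map_one, mul_one] at hk
  exact hk.symm

lemma irred_pp : Irreducible (X^2 + 1 : (ZMod 3)[X]) := by
  obtain ⟨g, hg0, hgg, hg'⟩ := exists_gen
  rw [← minpoly_w (g^2) hgg hg']
  exact minpoly.irreducible (IsIntegral.of_finite (ZMod 3) (g^2))

instance : Fact (Irreducible (X^2 + 1 : (ZMod 3)[X])) := ⟨irred_pp⟩

noncomputable def adjEquiv : AdjoinRoot (X^2 + 1 : (ZMod 3)[X]) ≃+* GaloisField 3 2 := by
  haveI : Fintype F9 := Fintype.ofFinite _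
  classical
  have hndX : (X^2 + 1 : (ZMod 3)[X]).natDegree = 2 := by
    rw [(by rw [map_one] : (X^2 + 1 : (ZMod 3)[X]) = X^2 + C 1)]
    exact natDegree_X_pow_add_C
  have hne : (X^2 + 1 : (ZMod 3)[X]) ≠ 0 := by
    intro h; have := congrArg natDegree h; rw [hndX] at this; simp at this
  let b := (AdjoinRoot.powerBasis hne).basis
  haveI : Fintype (AdjoinRoot (X^2 + 1 : (ZMod 3)[X])) :=
    Fintype.ofEquiv _ b.equivFun.toEquiv.symm
  have hcard : Fintype.card (AdjoinRoot (X^2 + 1 : (ZMod 3)[X])) = 9 := by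
    rw [Fintype.card_congr b.equivFun.toEquiv]
    rw [Fintype.card_fun, ZMod.card]
    rw [AdjoinRoot.powerBasis_dim, hndX]; norm_num
  have hcardF : Fintype.card F9 = 9 := by
    have := GaloisField.card 3 2 (by norm_num)
    rwa [Nat.card_eq_fintype_card] at this
  exact FiniteField.ringEquivOfCardEq (by rw [hcard, hcardF])

end Aux

set_option maxHeartbeats 2000000 in
theorem stmt_14 {K : Type*} [Field K]
    (q : K → Module.End (ZMod 3) (GaloisField 3 2))
    (hq : IsMultiplicativeQuadraticMap q)
    (hnorm₁ : ∀ a : K, a ≠ 0 → ∀ y : GaloisField 3 2, y ≠ 0 →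
      ∃ z : GaloisField 3 2, z ≠ 0 ∧ q a * iota (y ^ 2) * q a⁻¹ = iota (z ^ 2))
    (hnorm₂ : ∀ a : K, a ≠ 0 → ∀ y : GaloisField 3 2, y ≠ 0 →
      ∃ b : K, b ≠ 0 ∧ iota (y ^ 2) * q a * iota ((y⁻¹) ^ 2) = q b)
    (hnotin : ¬ ∀ a : K, q a ∈ Set.range iota) :
    Nat.card K = 9 ∧
    Nonempty ((Subring.closure (Set.range q)) ≃+* GaloisField 3 2) := by
  classical
  letI : Ring EE := @Module.End.instRing (ZMod 3) F9 _ (Ring.toAddCommGroup) _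
  obtain ⟨a₀, ha₀⟩ := not_forall.mp hnotin
  set t := q a₀ with ht_def
  have h3E : (3 : EE) = 0 := three_eq_zero
  have h2E : (2 : EE) = -1 := by
    have h : (2 : EE) - (-1) = 3 := by norm_num
    rw [h3E] at h
    exact sub_eq_zero.mp h
  have hq0 : q 0 = 0 := by simpa using hq.map_int 0
  have hq1 : q 1 = 1 := by simpa using hq.map_int 1
  have hqm1 : q (-1) = 1 := by
    have := hq.map_int (-1); push_cast at this; simpa using this
  have hq2K : q (2:K) = 1 := by
    have := hq.map_int 2; push_cast at this
    rw [this, h2E]; exact neg_one_sq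
  have ha₀0 : a₀ ≠ 0 := by
    intro h
    exact ha₀ ⟨0, by rw [map_zero, ht_def, h, hq0]⟩
  have hqneg : ∀ a : K, q (-a) = q a := by
    intro a
    rw [show -a = (-1)*a by ring, hq.map_mul, hqm1, one_mul]
  have hunit : ∀ a : K, a ≠ 0 → q a * q a⁻¹ = 1 ∧ q a⁻¹ * q a = 1 := by
    intro a ha
    constructor
    · rw [← hq.map_mul, mul_inv_cancel₀ ha, hq1]
    · rw [← hq.map_mul, inv_mul_cancel₀ ha, hq1]
  have haniso : ∀ a : K, q a = 0 → a = 0 := by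
    intro a h
    by_contra ha
    have := (hunit a ha).1
    rw [h, zero_mul] at this
    exact zero_ne_one this
  have invt : t * q a₀⁻¹ = 1 ∧ q a₀⁻¹ * t = 1 := hunit a₀ ha₀0
  have ht0 : t ≠ 0 := fun h => ha₀ ⟨0, by rw [map_zero, h]⟩
  have ht1 : t ≠ 1 := fun h => ha₀ ⟨1, by rw [map_one, h]⟩
  have htm1 : t ≠ -1 := fun h => ha₀ ⟨-1, by rw [map_neg, map_one, h]⟩
  have hqcomm : ∀ a b : K, q a * q b = q b * q a := by
    intro a b
    rw [← hq.map_mul, ← hq.map_mul, mul_comm]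
  -- the subtraction identity
  have hsub : ∀ c : K, q (1 - c) = 1 + 1 + (q c + q c) - q (1 + c) := by
    intro c
    have h := hq.biadd_left c (-c) 1
    rw [show c + -c + 1 = (1:K) by ring, show c + -c = (0:K) by ring] at h
    rw [hq0, hq1, hqneg] at h
    rw [show (-c) + 1 = 1 - c by ring, show c + 1 = 1 + c by ring] at h
    exact eq_of_diff h (-1) 0 (by noncomm_ring)
  -- normalizer machinery
  obtain ⟨g, hg0, hgg, hg'⟩ := exists_gen
  have hu2 : iota (g^2) * iota (g^2) = -1 := by
    rw [← map_mul, hgg, map_neg, map_one]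
  have hcent : ∀ x : EE, x * iota (g^2) = iota (g^2) * x → x ∈ Set.range iota :=
    fun x h => comm_mem_range_iota (g^2) hg' x h
  have hrangecase : ∀ x : EE, x ∈ Set.range iota →
      (x = 0 ∨ x = 1 ∨ x = -1) ∨
      (∃ v, iota v = x ∧ ∀ c : ZMod 3, algebraMap (ZMod 3) F9 c ≠ v) := by
    rintro x ⟨v, hv⟩
    by_cases hc : ∃ c : ZMod 3, algebraMap (ZMod 3) F9 c = v
    · obtain ⟨c, hc⟩ := hc
      left
      have hx : x = algebraMap (ZMod 3) EE c := by
        rw [← hv, ← hc]; exact iota.commutes c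
      have hall : ∀ c : ZMod 3, c = 0 ∨ c = 1 ∨ c = 2 := by decide
      rcases hall c with h | h | h
      · left; rw [hx, h, map_zero]
      · right; left; rw [hx, h, map_one]
      · right; right; rw [hx, h, map_ofNat, h2E]
    · right
      exact ⟨v, hv, fun c h => hc ⟨c, h⟩⟩
  have hconj : ∀ a : K, a ≠ 0 →
      (q a * iota (g^2) = iota (g^2) * q a) ∨ (q a * iota (g^2) = -(iota (g^2) * q a)) := by
    intro a ha
    obtain ⟨z, hz0, hz⟩ := hnorm₁ a ha g hg0
    have inv := hunit a ha
    have hsq : iota (z^2) * iota (z^2) = -1 := by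
      rw [← hz]
      calc (q a * iota (g^2) * q a⁻¹) * (q a * iota (g^2) * q a⁻¹)
          = q a * iota (g^2) * (q a⁻¹ * q a) * iota (g^2) * q a⁻¹ := by noncomm_ring
        _ = q a * (iota (g^2) * iota (g^2)) * q a⁻¹ := by rw [inv.2]; noncomm_ring
        _ = (-1 : EE) * (q a * q a⁻¹) := by rw [hu2]; noncomm_ring
        _ = -1 := by rw [inv.1]; noncomm_ring
    have hz4 : z^2 * z^2 = -1 := by
      apply iota_inj
      rw [map_mul, hsq, map_neg, map_one]
    have hfac : (z^2 - g^2) * (z^2 + g^2) = 0 := by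
      linear_combination hz4 - hgg
    rcases mul_eq_zero.mp hfac with h | h
    · left
      have hz2 : z^2 = g^2 := by linear_combination h
      rw [hz2] at hz
      calc q a * iota (g^2) = q a * iota (g^2) * (q a⁻¹ * q a) := by rw [inv.2, mul_one]
        _ = (q a * iota (g^2) * q a⁻¹) * q a := by noncomm_ring
        _ = iota (g^2) * q a := by rw [hz]
    · right
      have hz2 : z^2 = -g^2 := by linear_combination h
      rw [hz2, map_neg] at hz
      calc q a * iota (g^2) = q a * iota (g^2) * (q a⁻¹ * q a) := by rw [inv.2, mul_one]
        _ = (q a * iota (g^2) * q a⁻¹) * q a := by noncomm_ring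
        _ = (-(iota (g^2))) * q a := by rw [hz]
        _ = -(iota (g^2) * q a) := by noncomm_ring
  have htu : t * iota (g^2) = -(iota (g^2) * t) := by
    rcases hconj a₀ ha₀0 with h | h
    · exact absurd (hcent t h) ha₀
    · exact h
  have hN4 : t * t = 1 ∨ t * t = -1 := by
    have hcomm : (t*t) * iota (g^2) = iota (g^2) * (t*t) := by
      calc (t*t) * iota (g^2) = t * (t * iota (g^2)) := by noncomm_ring
      _ = t * (-(iota (g^2) * t)) := by rw [htu]
      _ = (-(t * iota (g^2))) * t := by noncomm_ring
      _ = (-(-(iota (g^2) * t))) * t := by rw [htu]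
      _ = iota (g^2) * (t*t) := by noncomm_ring
    have hmem := hcent _ hcomm
    rcases hrangecase _ hmem with (h0 | h0 | h0) | ⟨v, hv, hv'⟩
    · exfalso
      have hone : (t*t) * (q a₀⁻¹ * q a₀⁻¹) = 1 := by
        calc (t*t) * (q a₀⁻¹ * q a₀⁻¹) = t * ((t * q a₀⁻¹) * q a₀⁻¹) := by noncomm_ring
        _ = 1 := by rw [invt.1, one_mul]; exact invt.1
      rw [h0, zero_mul] at hone
      exact zero_ne_one hone
    · left; exact h0
    · right; exact h0
    · exfalso
      apply ha₀
      apply comm_mem_range_iota v hv' t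
      rw [hv]
      noncomm_ring
  have ht'pm : q a₀⁻¹ = t ∨ q a₀⁻¹ = -t := by
    rcases hN4 with h | h
    · left
      calc q a₀⁻¹ = q a₀⁻¹ * (t * t) := by rw [h, mul_one]
      _ = (q a₀⁻¹ * t) * t := by noncomm_ring
      _ = t := by rw [invt.2, one_mul]
    · right
      calc q a₀⁻¹ = -(q a₀⁻¹ * (t * t)) := by rw [h]; noncomm_ring
      _ = -((q a₀⁻¹ * t) * t) := by noncomm_ring
      _ = -t := by rw [invt.2, one_mul]
  have hrange : ∀ a : K, a ≠ 0 → q a = 1 ∨ q a = -1 ∨ q a = t ∨ q a = -t := by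
    intro a ha
    have hqa0 : q a ≠ 0 := by
      intro h; exact ha (haniso a h)
    have hca : t * q a = q a * t := hqcomm a₀ a
    rcases hconj a ha with h | h
    · have hmem := hcent _ h
      rcases hrangecase _ hmem with (h0 | h0 | h0) | ⟨v, hv, hv'⟩
      · exact absurd h0 hqa0
      · left; exact h0
      · right; left; exact h0
      · exfalso
        apply ha₀
        apply comm_mem_range_iota v hv' t
        rw [hv]
        exact hca
    · have hcomm : (q a * t) * iota (g^2) = iota (g^2) * (q a * t) := by
        calc (q a * t) * iota (g^2) = q a * (t * iota (g^2)) := by noncomm_ring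
        _ = q a * (-(iota (g^2) * t)) := by rw [htu]
        _ = (-(q a * iota (g^2))) * t := by noncomm_ring
        _ = (-(-(iota (g^2) * q a))) * t := by rw [h]
        _ = iota (g^2) * (q a * t) := by noncomm_ring
      have hmem := hcent _ hcomm
      have hinva := hunit a ha
      have hu' : (q a * t) * (q a₀⁻¹ * q a⁻¹) = 1 := by
        calc (q a * t) * (q a₀⁻¹ * q a⁻¹) = q a * ((t * q a₀⁻¹) * q a⁻¹) := by noncomm_ring
        _ = q a * q a⁻¹ := by rw [invt.1, one_mul]
        _ = 1 := hinva.1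
      have hkey : ∀ w : EE, q a * t = w → q a = w * q a₀⁻¹ := by
        intro w hw
        calc q a = q a * (t * q a₀⁻¹) := by rw [invt.1, mul_one]
        _ = (q a * t) * q a₀⁻¹ := by noncomm_ring
        _ = w * q a₀⁻¹ := by rw [hw]
      rcases hrangecase _ hmem with (h0 | h0 | h0) | ⟨v, hv, hv'⟩
      · exfalso
        rw [h0, zero_mul] at hu'
        exact zero_ne_one hu'
      · have hqa : q a = q a₀⁻¹ := by rw [hkey 1 h0, one_mul]
        rcases ht'pm with h' | h'
        · right; right; left; rw [hqa, h']
        · right; right; right; rw [hqa, h']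
      · have hqa : q a = -(q a₀⁻¹) := by rw [hkey (-1) h0]; noncomm_ring
        rcases ht'pm with h' | h'
        · right; right; right; rw [hqa, h']
        · right; right; left; rw [hqa, h', neg_neg]
      · exfalso
        apply ha₀
        apply comm_mem_range_iota v hv' t
        rw [hv]
        calc t * (q a * t) = (t * q a) * t := by noncomm_ring
        _ = (q a * t) * t := by rw [hca]
  -- kernel lemma
  have K1 : ∀ c : K, q c = 1 → c = 1 ∨ c = -1 ∨ (c*c = -1 ∧ q (1+c) = -1) := by
    intro c hc
    by_cases hc1 : c = 1
    · left; exact hc1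
    by_cases hcm : c = -1
    · right; left; exact hcm
    right; right
    have h1pc : (1:K) + c ≠ 0 := by
      intro h; exact hcm (by linear_combination h)
    have h1mc : (1:K) - c ≠ 0 := by
      intro h; exact hc1 (by linear_combination -h)
    have hval := hsub c
    rw [hc] at hval
    rcases hrange (1+c) h1pc with hs | hs | hs | hs
    · exfalso
      rw [hs] at hval
      exact h1mc (haniso _ (eq_of_diff hval 1 1 (by noncomm_ring)))
    · rw [hs] at hval
      have hm : q (1-c) = -1 := eq_of_diff hval 1 (1+1) (by noncomm_ring)
      have hprod : q (1 - c*c) = 1 := by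
        have hfac : (1 - c*c : K) = (1+c)*(1-c) := by ring
        rw [hfac, hq.map_mul, hs, hm]; noncomm_ring
      have hcc : q (c*c) = 1 := by rw [hq.map_mul, hc, one_mul]
      have hval2 := hsub (c*c)
      rw [hcc, hprod] at hval2
      have h0 : q (1 + c*c) = 0 := eq_of_diff hval2 1 1 (by noncomm_ring)
      have h1 : (1:K) + c*c = 0 := haniso _ h0
      exact ⟨by linear_combination h1, hs⟩
    · exfalso
      rw [hs] at hval
      rcases hrange (1-c) h1mc with h | h | h | h
      · exact ht0 (eq_of_diff (h.symm.trans hval) 1 1 (by noncomm_ring))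
      · exact htm1 (eq_of_diff (h.symm.trans hval) 1 (1+1) (by noncomm_ring))
      · exact htm1 (eq_of_diff (h.symm.trans hval) (-1) (t-1) (by noncomm_ring))
      · exact one_ne_zero (eq_of_diff (h.symm.trans hval) (-1) (-1) (by noncomm_ring))
    · exfalso
      rw [hs] at hval
      rcases hrange (1-c) h1mc with h | h | h | h
      · exact ht0 (eq_of_diff (h.symm.trans hval) (-1) (-1) (by noncomm_ring))
      · exact ht1 (eq_of_diff (h.symm.trans hval) (-1) (-(1+1)) (by noncomm_ring))
      · exact one_ne_zero (eq_of_diff (h.symm.trans hval) (-1) (-1) (by noncomm_ring))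
      · exact ht1 (eq_of_diff (h.symm.trans hval) 1 (t+1) (by noncomm_ring))
  -- pair lemma
  have K2 : ∀ z : K, q z = t →
      (q (1+z) = -1 ∧ q (1-z) = -t) ∨ (q (1+z) = -t ∧ q (1-z) = -1) := by
    intro z hz
    have h1pz : (1:K) + z ≠ 0 := by
      intro h
      have : z = -1 := by linear_combination h
      rw [this, hqm1] at hz
      exact ht1 hz.symm
    have h1mz : (1:K) - z ≠ 0 := by
      intro h
      have : z = 1 := by linear_combination -h
      rw [this, hq1] at hz
      exact ht1 hz.symm
    have hval := hsub z
    rw [hz] at hval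
    rcases hrange (1+z) h1pz with hs | hs | hs | hs
    · exfalso
      rw [hs] at hval
      rcases hrange (1-z) h1mz with h | h | h | h
      · exact ht0 (eq_of_diff (h.symm.trans hval) 1 t (by noncomm_ring))
      · exact htm1 (eq_of_diff (h.symm.trans hval) 1 (t+1) (by noncomm_ring))
      · exact htm1 (eq_of_diff (h.symm.trans hval) (-1) 0 (by noncomm_ring))
      · exact one_ne_zero (eq_of_diff (h.symm.trans hval) (-1) (-t) (by noncomm_ring))
    · rw [hs] at hval
      left
      exact ⟨hs, eq_of_diff hval 1 (t+1) (by noncomm_ring)⟩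
    · exfalso
      rw [hs] at hval
      rcases hrange (1-z) h1mz with h | h | h | h
      · exact htm1 (eq_of_diff (h.symm.trans hval) (-1) 0 (by noncomm_ring))
      · exact ht0 (eq_of_diff (h.symm.trans hval) (-1) (-1) (by noncomm_ring))
      · exact one_ne_zero (eq_of_diff (h.symm.trans hval) 1 1 (by noncomm_ring))
      · exact htm1 (eq_of_diff (h.symm.trans hval) 1 (t+1) (by noncomm_ring))
    · rw [hs] at hval
      right
      exact ⟨hs, eq_of_diff hval 1 (t+1) (by noncomm_ring)⟩
  -- a normalized element z with q z = t
  obtain ⟨z, hz, hz1, hz2⟩ : ∃ z : K, q z = t ∧ q (1+z) = -1 ∧ q (1-z) = -t := by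
    rcases K2 a₀ ht_def.symm with ⟨h1, h2⟩ | ⟨h1, h2⟩
    · exact ⟨a₀, ht_def.symm, h1, h2⟩
    · refine ⟨-a₀, by rw [hqneg, ← ht_def], ?_, ?_⟩
      · rw [show (1:K) + -a₀ = 1 - a₀ by ring]; exact h2
      · rw [show (1:K) - -a₀ = 1 + a₀ by ring]; exact h1
  have htt : t * t = -1 := by
    rcases hN4 with hN | hN
    swap
    · exact hN
    exfalso
    have hzz : q (z*z) = 1 := by rw [hq.map_mul, hz, hN]
    have hq1mzz : q (1 - z*z) = t := by
      have hfac : (1 - z*z : K) = (1+z)*(1-z) := by ring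
      rw [hfac, hq.map_mul, hz1, hz2]; noncomm_ring
    rcases K1 (z*z) hzz with h1 | h1 | ⟨h1, h2⟩
    · have hff : (z - 1)*(z+1) = 0 := by linear_combination h1
      rcases mul_eq_zero.mp hff with h' | h'
      · have hz1' : z = 1 := by linear_combination h'
        rw [hz1', hq1] at hz
        exact ht1 hz.symm
      · have hz1' : z = -1 := by linear_combination h'
        rw [hz1', hqm1] at hz
        exact ht1 hz.symm
    · have : (1 - z*z : K) = 2 := by rw [h1]; ring
      rw [this, hq2K] at hq1mzz
      exact ht1 hq1mzz.symm
    · have hval := hsub (z*z)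
      rw [hzz, h2, hq1mzz] at hval
      exact htm1 (eq_of_diff hval 1 (1+1) (by noncomm_ring))
  -- every nonzero element has a^16 = 1
  have h16 : ∀ a : K, a ≠ 0 → a^16 = 1 := by
    intro a ha
    have hq4 : q (a^4) = 1 := by
      have h4 : (a^4 : K) = ((a*a)*(a*a)) := by ring
      rw [h4, hq.map_mul, hq.map_mul]
      rcases hrange a ha with h | h | h | h <;> rw [h]
      · noncomm_ring
      · noncomm_ring
      · rw [htt]; noncomm_ring
      · rw [show ((-t) * -t) * ((-t) * -t) = (t*t)*(t*t) by noncomm_ring, htt]; noncomm_ring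
    rcases K1 (a^4) hq4 with h | h | ⟨h, _⟩
    · calc a^16 = (a^4)^4 := by ring
      _ = 1 := by rw [h]; norm_num
    · calc a^16 = (a^4)^4 := by ring
      _ = ((-1:K))^4 := by rw [h]
      _ = 1 := by norm_num
    · calc a^16 = ((a^4)*(a^4))^2 := by ring
      _ = ((-1:K))^2 := by rw [h]
      _ = 1 := by norm_num
  -- K is finite
  have hroots : ∀ a : K, (Polynomial.X^17 - Polynomial.X : Polynomial K).IsRoot a := by
    intro a
    simp only [Polynomial.IsRoot, Polynomial.eval_sub, Polynomial.eval_pow, Polynomial.eval_X]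
    by_cases ha : a = 0
    · rw [ha]; norm_num
    · have h := h16 a ha
      calc a^17 - a = a^16 * a - a := by ring
      _ = 0 := by rw [h]; ring
  have hPne : (Polynomial.X^17 - Polynomial.X : Polynomial K) ≠ 0 := by
    have hm : (Polynomial.X^17 - Polynomial.X : Polynomial K).Monic := by
      apply Polynomial.monic_X_pow_sub
      rw [Polynomial.degree_X]
      exact_mod_cast (by norm_num : (1:ℕ) < 17)
    exact hm.ne_zero
  haveI hKfin : Finite K := by
    apply Set.finite_univ_iff.mp
    apply (Polynomial.finite_setOf_isRoot hPne).subset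
    intro a _
    exact hroots a
  haveI : Fintype K := Fintype.ofFinite K
  -- char K = 3
  have h3K : (3:K) = 0 := by
    apply haniso
    have h := hq.map_int 3
    push_cast at h
    rw [h, h3E]
    norm_num
  haveI hchar : CharP K 3 := by
    have hdvd : ringChar K ∣ 3 := ringChar.dvd (by exact_mod_cast h3K)
    have hne1 : ringChar K ≠ 1 := CharP.ringChar_ne_one
    have h3 : ringChar K = 3 := by
      rcases (Nat.prime_three).eq_one_or_self_of_dvd _ hdvd with h | h
      · exact absurd h hne1
      · exact h
    exact h3 ▸ ringChar.charP K
  obtain ⟨n, hn3, hncard⟩ := FiniteField.card K 3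
  -- card K - 1 divides 16
  have hdvd16 : Fintype.card K - 1 ∣ 16 := by
    obtain ⟨γ, hγ⟩ := IsCyclic.exists_generator (α := Kˣ)
    have ho : orderOf γ = Fintype.card K - 1 := by
      rw [orderOf_eq_card_of_forall_mem_zpowers hγ, Nat.card_eq_fintype_card, Fintype.card_units]
    have hγ16 : γ^16 = 1 := by
      apply Units.ext
      push_cast
      exact h16 (γ:K) (Units.ne_zero γ)
    have := orderOf_dvd_of_pow_eq_one hγ16
    rwa [ho] at this
  have hm2 : (n:ℕ) = 1 ∨ (n:ℕ) = 2 := by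
    have h1 : 1 ≤ (n:ℕ) := n.one_le
    have hle : (3:ℕ)^(n:ℕ) - 1 ≤ 16 := Nat.le_of_dvd (by norm_num) (hncard ▸ hdvd16)
    by_contra hcon
    push_neg at hcon
    have h3le : 3 ≤ (n:ℕ) := by omega
    have : (3:ℕ)^3 ≤ 3^(n:ℕ) := Nat.pow_le_pow_right (by norm_num) h3le
    have h27 : (27:ℕ) ≤ 3^(n:ℕ) := by norm_num at this ⊢; exact this
    omega
  have hcard9 : Fintype.card K = 9 := by
    rcases hm2 with h | h
    · exfalso
      have hc3 : Fintype.card K = 3 := by rw [hncard, h]; norm_num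
      apply ha₀
      have ha3 : a₀^3 = a₀ := by
        have := FiniteField.pow_card a₀
        rwa [hc3] at this
      have hfac : a₀ * ((a₀ - 1) * (a₀ + 1)) = 0 := by linear_combination ha3
      rcases mul_eq_zero.mp hfac with h' | h'
      · exact absurd h' ha₀0
      rcases mul_eq_zero.mp h' with h'' | h''
      · have h1 : a₀ = 1 := by linear_combination h''
        exact ⟨1, by rw [map_one, ht_def, h1, hq1]⟩
      · have h1 : a₀ = -1 := by linear_combination h''
        exact ⟨1, by rw [map_one, ht_def, h1, hqm1]⟩
    · rw [hncard, h]; norm_num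
  constructor
  · rw [Nat.card_eq_fintype_card, hcard9]
  -- Part B : the subring generated by the image
  · have hsub1 : Subring.closure (Set.range q) ≤ Subring.closure {t} := by
      apply Subring.closure_le.mpr
      rintro x ⟨a, rfl⟩
      by_cases ha : a = 0
      · rw [ha, hq0]; exact Subring.zero_mem _
      rcases hrange a ha with h | h | h | h <;> rw [h]
      · exact Subring.one_mem _
      · exact Subring.neg_mem _ (Subring.one_mem _)
      · exact Subring.subset_closure (Set.mem_singleton t)
      · exact Subring.neg_mem _ (Subring.subset_closure (Set.mem_singleton t))
    have hsub2 : Subring.closure ({t} : Set EE) ≤ Subring.closure (Set.range q) := by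
      apply Subring.closure_le.mpr
      intro x hx
      rw [Set.mem_singleton_iff] at hx
      rw [hx]
      exact Subring.subset_closure ⟨a₀, ht_def.symm⟩
    have hRT : Subring.closure (Set.range q) = Subring.closure {t} :=
      le_antisymm hsub1 hsub2
    have hrootE : Polynomial.eval₂ (algebraMap (ZMod 3) EE) t
        (Polynomial.X^2 + 1 : (ZMod 3)[X]) = 0 := by
      rw [Polynomial.eval₂_add, Polynomial.eval₂_one, Polynomial.eval₂_X_pow]
      rw [pow_two, htt]
      simp
    have hcommt : ∀ a : ZMod 3, Commute (algebraMap (ZMod 3) EE a) t :=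
      fun a => Algebra.commutes a t
    set φ : (ZMod 3)[X] →+* Module.End (ZMod 3) F9 :=
      Polynomial.eval₂RingHom' (algebraMap (ZMod 3) EE) t hcommt with hφdef
    have hφeval : ∀ p : (ZMod 3)[X], φ p = Polynomial.eval₂ (algebraMap (ZMod 3) EE) t p :=
      fun p => rfl
    have hker : ∀ p : (ZMod 3)[X],
        p ∈ (Ideal.span {(Polynomial.X^2 + 1 : (ZMod 3)[X])}) → φ p = 0 := by
      intro p hp
      rw [Ideal.mem_span_singleton] at hp
      obtain ⟨c, rfl⟩ := hp
      rw [map_mul, hφeval, hrootE, zero_mul]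
    set Φ : (ZMod 3)[X] ⧸ Ideal.span {(Polynomial.X^2 + 1 : (ZMod 3)[X])} →+* Module.End (ZMod 3) F9 :=
      Ideal.Quotient.lift _ φ hker with hΦdef
    have hΦmk : ∀ p : (ZMod 3)[X],
        Φ (AdjoinRoot.mk _ p) = Polynomial.eval₂ (algebraMap (ZMod 3) EE) t p := by
      intro p
      exact Ideal.Quotient.lift_mk _ _ _
    have hΦroot : Φ (AdjoinRoot.root _) = t := by
      rw [← AdjoinRoot.mk_X, hΦmk, Polynomial.eval₂_X]
    have hΦrange : Φ.range = Subring.closure ({t} : Set EE) := by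
      apply le_antisymm
      · rintro x ⟨y, rfl⟩
        induction y using AdjoinRoot.induction_on with
        | ih p =>
          rw [hΦmk]
          induction p using Polynomial.induction_on' with
          | add f g hf hg =>
            rw [Polynomial.eval₂_add]
            exact Subring.add_mem _ hf hg
          | monomial n a =>
            rw [Polynomial.eval₂_monomial]
            apply Subring.mul_mem
            · have hcast : algebraMap (ZMod 3) EE a = ((a.val : ℕ) : EE) := by
                rw [← map_natCast (algebraMap (ZMod 3) EE) a.val, ZMod.natCast_val, ZMod.cast_id]
              rw [hcast]
              exact natCast_mem _ _
            · exact Subring.pow_mem _ (Subring.subset_closure (Set.mem_singleton t)) n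
      · apply Subring.closure_le.mpr
        intro x hx
        rw [Set.mem_singleton_iff] at hx
        exact ⟨AdjoinRoot.root _, by rw [hΦroot, hx]⟩
    have hΦinj : Function.Injective Φ := RingHom.injective (R := AdjoinRoot (Polynomial.X^2 + 1 : (ZMod 3)[X])) Φ
    refine ⟨?_⟩
    have e1 : AdjoinRoot (Polynomial.X^2 + 1 : (ZMod 3)[X]) ≃+* Φ.range :=
      RingEquiv.ofBijective Φ.rangeRestrict
        ⟨fun x y hxy => hΦinj (Subtype.ext_iff.mp hxy), Φ.rangeRestrict_surjective⟩
    have e2 : (Subring.closure (Set.range q)) ≃+* Φ.range :=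
      RingEquiv.subringCongr (hRT.trans hΦrange.symm)
    exact e2.trans (e1.symm.trans adjEquiv)
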